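/- Let h̃ be a semi-monotone degree-one lift descending to h : S¹ → S¹, suppose h has exactly ℓ flat spots J₁,…,J_ℓ, and on P(h) = S¹ minus the interiors of the flat spots h is C¹ with one-sided derivatives > 1. Then for every x ∈ S¹ whose entire forward orbit lies in P(h), there exists n ≥ 0 such that hⁿ(x) is a recurrent point of h. -/

import Mathlib

open Set Filter Topology MeasureTheory Function
open scoped ENNReal Classical

noncomputable section

/-- The circle ℝ/ℤ. -/
abbrev Circle1 : Type := AddCircle (1 : ℝ)

/-- The k-fold cover ℝ/kℤ. -/
abbrev CircleK (k : ℕ) : Type := AddCircle ((k : ℝ))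

/-- Projection ℝ → ℝ/ℤ. -/
def mk1 : ℝ → Circle1 := fun x => (x : Circle1)

/-- Projection ℝ → ℝ/kℤ. -/
def mkk (k : ℕ) : ℝ → CircleK k := fun x => (x : CircleK k)

/-- Covering projection S_k → S¹ induced by the identity on ℝ. -/
def piK (k : ℕ) : CircleK k → Circle1 :=
  QuotientAddGroup.map (AddSubgroup.zmultiples ((k : ℕ) : ℝ)) (AddSubgroup.zmultiples (1 : ℝ))
    (AddMonoidHom.id ℝ)
    (by
      intro x hx
      obtain ⟨n, rfl⟩ := AddSubgroup.mem_zmultiples_iff.mp hx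
      simp only [AddSubgroup.mem_comap, AddMonoidHom.id_apply]
      exact AddSubgroup.mem_zmultiples_iff.mpr
        ⟨n * (k : ℤ), by push_cast [zsmul_eq_mul]; ring⟩)

/-- Deck transformation of S_k, induced by x ↦ x + 1. -/
def TK (k : ℕ) : CircleK k → CircleK k := fun x => x + mkk k 1

/-- Forward orbit of a point. -/
def fwdOrbit {X : Type*} (f : X → X) (x : X) : Set X := Set.range fun n : ℕ => f^[n] x

/-- A nonempty compact invariant set on which every forward orbit is dense. -/
def IsMinimalSet {X : Type*} [TopologicalSpace X] (f : X → X) (Z : Set X) : Prop :=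
  Z.Nonempty ∧ IsCompact Z ∧ Set.MapsTo f Z Z ∧ ∀ z ∈ Z, Z ⊆ closure (fwdOrbit f z)

/-- x = lim f^[n i] x along some sequence n i → ∞. -/
def IsRecurrentPt {X : Type*} [TopologicalSpace X] (f : X → X) (x : X) : Prop :=
  ∃ n : ℕ → ℕ, Tendsto n atTop atTop ∧ Tendsto (fun i => f^[n i] x) atTop (𝓝 x)

/-- The point x has rotation number ρ for the lift gt. -/
def HasPtRotNum (gt : ℝ → ℝ) (x ρ : ℝ) : Prop :=
  Tendsto (fun n : ℕ => (gt^[n] x - x) / n) atTop (𝓝 ρ)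

/-- gt has rotation number ρ (the limit exists for all points and equals ρ). -/
def HasRotNum (gt : ℝ → ℝ) (ρ : ℝ) : Prop := ∀ x, HasPtRotNum gt x ρ

/-- The rotation set of a lift. -/
def rotSet (gt : ℝ → ℝ) : Set ℝ := {ρ | ∃ x, HasPtRotNum gt x ρ}

/-- Continuous nondecreasing degree-one lift. -/
def IsSemiMonotoneLift (ht : ℝ → ℝ) : Prop :=
  Continuous ht ∧ Monotone ht ∧ ∀ x, ht (x + 1) = ht x + 1

/-- [a,b] is (a fundamental-domain representative of) a maximal nontrivial closed
arc on which the induced circle map is constant. -/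
def IsFlatSpot (ht : ℝ → ℝ) (a b : ℝ) : Prop :=
  a < b ∧ b - a < 1 ∧ (∀ x ∈ Set.Icc a b, ht x = ht a) ∧
    ∀ a' b', a' ≤ a → b ≤ b' → (∀ x ∈ Set.Icc a' b', ht x = ht a) → a' = a ∧ b' = b

/-- The left shift on one-sided sequences. -/
def shiftSeq {α : Type*} : (ℕ → α) → ℕ → α := fun s n => s (n + 1)

/-- Strict lexicographic order on one-sided sequences. -/
def lexLt {α : Type*} [LT α] (s t : ℕ → α) : Prop :=
  ∃ n, (∀ i, i < n → s i = t i) ∧ s n < t n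

/-- Lexicographic order on one-sided sequences. -/
def lexLe {α : Type*} [LT α] (s t : ℕ → α) : Prop := s = t ∨ lexLt s t

/-- Reduction of every entry mod 2. -/
def pihat : (ℕ → ℕ) → ℕ → ℕ := fun s n => s n % 2

/-- The sequence s has symbolic rotation number ω: the averages of the mod-2
reductions of its entries converge to ω. -/
def symbRot (s : ℕ → ℕ) (ω : ℝ) : Prop :=
  Tendsto (fun n : ℕ => (∑ i ∈ Finset.range (n + 1), ((s i % 2 : ℕ) : ℝ)) / (n + 1))
    atTop (𝓝 ω)

/-- Allowed transitions for Ω_k (entries mod 2k). -/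
def transK (k : ℕ) (a c : ℕ) : Prop :=
  (Even a ∧ (c = a ∨ c = a + 1)) ∨ (Odd a ∧ (c = (a + 1) % (2 * k) ∨ c = (a + 2) % (2 * k)))

/-- The subshift Ω_k ⊆ Σ⁺_{2k}. -/
def OmegaK (k : ℕ) : Set (ℕ → ℕ) :=
  {s | (∀ n, s n < 2 * k) ∧ ∀ n, transK k (s n) (s (n + 1))}

/-- Allowed transitions for Ω_∞. -/
def transZ (a c : ℤ) : Prop :=
  (Even a ∧ (c = a ∨ c = a + 1)) ∨ (Odd a ∧ (c = a + 1 ∨ c = a + 2))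

/-- The subshift Ω_∞ ⊆ ℤ^ℕ. -/
def OmegaInf : Set (ℕ → ℤ) := {s | ∀ n, transZ (s n) (s (n + 1))}

/-- p̂_k : Ω_∞ → Ω_k, reduction of all entries mod 2k. -/
def projK (k : ℕ) : (ℕ → ℤ) → ℕ → ℕ := fun s n => (s n % (2 * k : ℤ)).toNat

/-- A symbolic k-fold semi-monotone subset of Ω_k. -/
def SymbolicKfsm (k : ℕ) (Z : Set (ℕ → ℕ)) : Prop :=
  Z ⊆ OmegaK k ∧ Set.MapsTo shiftSeq Z Z ∧
    ∃ Z' : Set (ℕ → ℤ), Z' ⊆ OmegaInf ∧ Set.MapsTo shiftSeq Z' Z' ∧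
      (fun s : ℕ → ℤ => fun n => s n + 2 * k) '' Z' = Z' ∧
      (∀ s ∈ Z', ∀ t ∈ Z', lexLe s t → lexLe (shiftSeq s) (shiftSeq t)) ∧
      projK k '' Z' = Z

/-- The dynamical order interval ⟨a, b⟩. -/
def dynInterval (a b : ℕ → ℕ) : Set (ℕ → ℕ) :=
  {s | ∀ n, lexLe a (shiftSeq^[n] s) ∧ lexLe (shiftSeq^[n] s) b}

/-- The unique shift-invariant probability measure on the orbit of a periodic
point of period N: the uniform average of point masses along the orbit. -/
noncomputable def orbitMeasure (s : ℕ → ℕ) (N : ℕ) : Measure (ℕ → ℕ) :=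
  (N : ℝ≥0∞)⁻¹ • ∑ i ∈ Finset.range N, Measure.dirac (shiftSeq^[i] s)

/-! ### The Hedlund–Morse construction -/

/-- Partial sums ν₁ + ⋯ + ν_j. -/
def psum {k : ℕ} (ν : Fin k → ℝ) (j : ℕ) : ℝ := ∑ i : Fin k, if (i : ℕ) < j then ν i else 0

/-- An allowable HM parameter pair. -/
def HMAllowable {k : ℕ} (ω : ℝ) (ν : Fin k → ℝ) : Prop :=
  0 < ω ∧ ω < 1 ∧ (∀ i, 0 ≤ ν i) ∧ ∑ i, ν i = k * (1 - ω)

/-- Left endpoint of the HM address interval X_m. -/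
def hmL {k : ℕ} (ω : ℝ) (ν : Fin k → ℝ) (m : ℕ) : ℝ :=
  if Even m then psum ν (m / 2) + ((m / 2 : ℕ) : ℝ) * ω
  else psum ν (m / 2 + 1) + ((m / 2 : ℕ) : ℝ) * ω

/-- Right endpoint of the HM address interval X_m. -/
def hmR {k : ℕ} (ω : ℝ) (ν : Fin k → ℝ) (m : ℕ) : ℝ :=
  if Even m then psum ν (m / 2 + 1) + ((m / 2 : ℕ) : ℝ) * ω
  else psum ν (m / 2 + 1) + ((m / 2 + 1 : ℕ) : ℝ) * ω

/-- The HM address interval X_m ⊆ ℝ (a fundamental-domain representative). -/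
def hmX {k : ℕ} (ω : ℝ) (ν : Fin k → ℝ) (m : ℕ) : Set ℝ := Set.Icc (hmL ω ν m) (hmR ω ν m)

/-- Rigid rotation by ω on S_k. -/
def RotK (k : ℕ) (ω : ℝ) : CircleK k → CircleK k := fun x => x + mkk k ω

/-- The good set: points whose forward rotation orbit avoids all endpoints of the
address intervals. -/
def hmGood (k : ℕ) (ω : ℝ) (ν : Fin k → ℝ) : Set (CircleK k) :=
  {x | ∀ n : ℕ, ∀ m, m < 2 * k →
    (RotK k ω)^[n] x ≠ mkk k (hmL ω ν m) ∧ (RotK k ω)^[n] x ≠ mkk k (hmR ω ν m)}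

/-- The address of a point of S_k (the index m with x ∈ X_m; junk value 0 if none). -/
noncomputable def hmAddr (k : ℕ) (ω : ℝ) (ν : Fin k → ℝ) (x : CircleK k) : ℕ :=
  if h : ∃ m, m < 2 * k ∧ x ∈ mkk k '' hmX ω ν m then h.choose else 0

/-- The HM itinerary of a point of S_k. -/
noncomputable def hmZeta (k : ℕ) (ω : ℝ) (ν : Fin k → ℝ) (x : CircleK k) : ℕ → ℕ :=
  fun n => hmAddr k ω ν ((RotK k ω)^[n] x)

/-- B_k(ω,ν): the closure of the set of itineraries of good points. -/
noncomputable def hmB (k : ℕ) (ω : ℝ) (ν : Fin k → ℝ) : Set (ℕ → ℕ) :=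
  closure (hmZeta k ω ν '' hmGood k ω ν)

/-- λ_k(ω,ν) = ζ_*(Leb)/k, where Leb is Lebesgue measure on S_k = [0,k). -/
noncomputable def hmLambda (k : ℕ) (ω : ℝ) (ν : Fin k → ℝ) : Measure (ℕ → ℕ) :=
  (k : ℝ≥0∞)⁻¹ •
    ((((volume.restrict (Set.Ico (0 : ℝ) (k : ℝ))).map (mkk k)).restrict
        (hmGood k ω ν)).map (hmZeta k ω ν))

/-- The left cyclic shift τ on ℝ^k. -/
def cyc {k : ℕ} (ν : Fin k → ℝ) : Fin k → ℝ :=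
  fun i => ν ⟨(i.val + 1) % k, Nat.mod_lt _ (Nat.lt_of_le_of_lt (Nat.zero_le _) i.isLt)⟩

/-- The Sturmian minimal set with rotation number ω. -/
noncomputable def sturmianSet (ω : ℝ) : Set (ℕ → ℕ) :=
  if ω = 0 then {fun _ => 0}
  else if ω = 1 then {fun _ => 1}
  else hmB 1 ω fun _ => 1 - ω

/-! ### The class 𝒢 of bimodal degree-one circle maps -/

/-- Piecewise C² on [0,1]. -/
def PiecewiseC2 (f : ℝ → ℝ) : Prop :=
  ∃ (n : ℕ) (x : ℕ → ℝ), x 0 = 0 ∧ x n = 1 ∧ (∀ i, i < n → x i ≤ x (i + 1)) ∧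
    ∀ i, i < n → ContDiffOn ℝ 2 f (Set.Ioo (x i) (x (i + 1)))

/-- g : S¹ → S¹ belongs to the class 𝒢, with lift gt and turning point xmax. -/
structure GMap (g : Circle1 → Circle1) (gt : ℝ → ℝ) (xmax : ℝ) : Prop where
  cont : Continuous gt
  pw : PiecewiseC2 gt
  deg : ∀ x, gt (x + 1) = gt x + 1
  lift : ∀ x, g (mk1 x) = mk1 (gt x)
  xmax_pos : 0 < xmax
  xmax_lt_one : xmax < 1
  expand : ∀ x ∈ Set.Ioo (0 : ℝ) xmax, ∃ d, 1 < d ∧ HasDerivAt gt d x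
  dec : ∀ x ∈ Set.Icc xmax 1, ∀ y ∈ Set.Icc xmax 1, x < y → gt y < gt x
  low : 0 ≤ gt 0
  mid : gt 0 < gt xmax
  high : gt xmax ≤ xmax + 1

/-- The address intervals I_m ⊆ ℝ: I_{2j} = [j, zmax+j], I_{2j+1} = [zmin+j, xmax+j]. -/
def addrI (zmax zmin xmax : ℝ) (m : ℤ) : Set ℝ :=
  if Even m then Set.Icc ((m / 2 : ℤ) : ℝ) (zmax + ((m / 2 : ℤ) : ℝ))
  else Set.Icc (zmin + (((m - 1) / 2 : ℤ) : ℝ)) (xmax + (((m - 1) / 2 : ℤ) : ℝ))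

/-- Λ_∞(g): points of ℝ whose forward gt-orbit stays in the address intervals. -/
def LambdaInf (gt : ℝ → ℝ) (zmax zmin xmax : ℝ) : Set ℝ :=
  {x | ∀ n : ℕ, ∃ m : ℤ, gt^[n] x ∈ addrI zmax zmin xmax m}

/-- Λ_k(g): points of S_k whose forward g_k-orbit stays in I_0 ∪ ⋯ ∪ I_{2k-1}. -/
def LambdaK (k : ℕ) (gk : CircleK k → CircleK k) (zmax zmin xmax : ℝ) : Set (CircleK k) :=
  {x | ∀ n : ℕ, ∃ m : ℕ, m < 2 * k ∧ gk^[n] x ∈ mkk k '' addrI zmax zmin xmax (m : ℤ)}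

/-- Λ₁(g): points of S¹ whose forward g-orbit stays in I₀ ∪ I₁. -/
def Lambda1 (g : Circle1 → Circle1) (zmax zmin xmax : ℝ) : Set Circle1 :=
  {x | ∀ n : ℕ, g^[n] x ∈ mk1 '' Set.Icc 0 zmax ∪ mk1 '' Set.Icc zmin xmax}

/-- A k-fold semi-monotone subset of S_k: it has a lift Z' ⊆ ℝ that is
gt-invariant, invariant under x ↦ x + k, and on which gt is weakly order
preserving. -/
def PhysKfsmK (gt : ℝ → ℝ) (k : ℕ) (Z : Set (CircleK k)) : Prop :=
  ∃ Z' : Set ℝ, (∀ x ∈ Z', gt x ∈ Z') ∧ (fun x => x + (k : ℝ)) '' Z' = Z' ∧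
    (∀ x ∈ Z', ∀ y ∈ Z', x < y → gt x ≤ gt y) ∧ mkk k '' Z' = Z

/-- A k-fold semi-monotone subset of S¹. -/
def PhysKfsm1 (gt : ℝ → ℝ) (k : ℕ) (Z : Set Circle1) : Prop :=
  ∃ Z' : Set ℝ, (∀ x ∈ Z', gt x ∈ Z') ∧ (fun x => x + (k : ℝ)) '' Z' = Z' ∧
    (∀ x ∈ Z', ∀ y ∈ Z', x < y → gt x ≤ gt y) ∧ mk1 '' Z' = Z


/-- The positive-slope region P(h) in ℝ: the complement of the interiors of all
the (translated) flat spots. -/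
def flatComplR {l : ℕ} (a b : Fin l → ℝ) : Set ℝ :=
  {x | ∀ (i : Fin l) (n : ℤ), x ∉ Set.Ioo (a i + n) (b i + n)}

/-- The positive-slope region P(h) in the circle: the complement of the interiors
of the flat spots. -/
def flatComplC {l : ℕ} (a b : Fin l → ℝ) : Set Circle1 :=
  (⋃ i, mk1 '' Set.Ioo (a i) (b i))ᶜ

end

section Basics

variable {ht : ℝ → ℝ}

lemma s6_ht_int (hdeg : ∀ x, ht (x + 1) = ht x + 1) (z : ℝ) (p : ℤ) :
    ht (z + p) = ht z + p := by
  induction p using Int.induction_on with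
  | zero => simp
  | succ n ih =>
    have : z + ((n : ℤ) + 1 : ℤ) = (z + (n : ℤ)) + 1 := by push_cast; ring
    rw [this, hdeg, ih]; push_cast; ring
  | pred n ih =>
    have h1 : z + (-(n : ℤ) - 1 : ℤ) + 1 = z + (-(n : ℤ) : ℤ) := by push_cast; ring
    have h2 := hdeg (z + (-(n : ℤ) - 1 : ℤ))
    rw [h1, ih] at h2
    push_cast at h2 ⊢
    linarith

lemma s6_iter_int (hdeg : ∀ x, ht (x + 1) = ht x + 1) (j : ℕ) (z : ℝ) (p : ℤ) :
    ht^[j] (z + p) = ht^[j] z + p := by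
  induction j generalizing z with
  | zero => simp
  | succ k ih =>
    rw [Function.iterate_succ_apply, Function.iterate_succ_apply,
      s6_ht_int hdeg, ih]

lemma s6_hlift_iter {h : Circle1 → Circle1} (hlift : ∀ x, h (mk1 x) = mk1 (ht x))
    (n : ℕ) (z : ℝ) : h^[n] (mk1 z) = mk1 (ht^[n] z) := by
  induction n with
  | zero => simp
  | succ k ih =>
    rw [Function.iterate_succ_apply', ih, hlift]
    exact congrArg mk1 (Function.iterate_succ_apply' ht k z).symm

lemma s6_mk1_int (u : ℝ) (p : ℤ) : mk1 (u + p) = mk1 u := by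
  show ((u + p : ℝ) : Circle1) = (u : Circle1)
  rw [QuotientAddGroup.eq_iff_sub_mem]
  refine AddSubgroup.mem_zmultiples_iff.2 ⟨p, by simp⟩

lemma s6_mk1_eq_iff {u v : ℝ} : mk1 u = mk1 v ↔ ∃ p : ℤ, v = u + p := by
  constructor
  · intro hh
    have := (QuotientAddGroup.eq_iff_sub_mem).1 hh
    obtain ⟨k, hk⟩ := AddSubgroup.mem_zmultiples_iff.1 this
    exact ⟨-k, by push_cast; simp only [zsmul_eq_mul, mul_one] at hk; linarith⟩
  · rintro ⟨p, rfl⟩; exact (s6_mk1_int u p).symm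

lemma s6_mk1_cont : Continuous mk1 := continuous_quotient_mk'

lemma s6_memC_iff {l : ℕ} {a b : Fin l → ℝ} {u : ℝ} :
    mk1 u ∈ flatComplC a b ↔ u ∈ flatComplR a b := by
  constructor
  · intro hu i n hin
    apply hu
    refine Set.mem_iUnion.2 ⟨i, ⟨u - n, ?_, ?_⟩⟩
    · constructor <;> [linarith [hin.1]; linarith [hin.2]]
    · simpa using (s6_mk1_int (u - n) n).symm
  · intro hu hmem
    obtain ⟨i, y, hy, hyu⟩ := by
      simpa using hmem
    obtain ⟨p, hp⟩ := s6_mk1_eq_iff.1 hyu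
    exact hu i p ⟨by linarith [hy.1], by linarith [hy.2]⟩

lemma s6_flatR_closed {l : ℕ} (a b : Fin l → ℝ) : IsClosed (flatComplR a b) := by
  have : flatComplR a b = ⋂ (i : Fin l), ⋂ (n : ℤ), (Set.Ioo (a i + n) (b i + n))ᶜ := by
    ext x; simp [flatComplR]
  rw [this]
  exact isClosed_iInter fun i => isClosed_iInter fun n => isOpen_Ioo.isClosed_compl

lemma s6_flatR_int {l : ℕ} {a b : Fin l → ℝ} {u : ℝ} (hu : u ∈ flatComplR a b) (p : ℤ) :
    u + p ∈ flatComplR a b := by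
  intro i n hin
  refine hu i (n - p) ⟨?_, ?_⟩ <;> push_cast <;> [linarith [hin.1]; linarith [hin.2]]

lemma s6_mvt {l : ℕ} {a b : Fin l → ℝ} (hcont : Continuous ht)
    {D : ℝ → ℝ}
    (hD : ∀ x ∈ flatComplR a b, 1 < D x ∧ HasDerivWithinAt ht (D x) (flatComplR a b) x)
    (u v : ℝ) (huv : u < v) (hsub : Set.Icc u v ⊆ flatComplR a b) :
    v - u < ht v - ht u := by
  have hderiv : ∀ c ∈ Set.Ioo u v, HasDerivAt ht (D c) c := by
    intro c hc
    have hcR : c ∈ flatComplR a b := hsub (Set.mem_Icc_of_Ioo hc)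
    refine (hD c hcR).2.hasDerivAt ?_
    exact Filter.mem_of_superset (Ioo_mem_nhds hc.1 hc.2)
      (fun y hy => hsub (Set.mem_Icc_of_Ioo hy))
  obtain ⟨c, hc, hslope⟩ := exists_hasDerivAt_eq_slope ht D huv hcont.continuousOn hderiv
  have h1 : 1 < D c := (hD c (hsub (Set.mem_Icc_of_Ioo hc))).1
  have hvu : 0 < v - u := by linarith
  rw [hslope] at h1
  rw [lt_div_iff₀ hvu] at h1
  linarith

lemma s6_delta {l : ℕ} (a b : Fin l → ℝ) (hab : ∀ i, a i < b i) :
    ∃ δ : ℝ, 0 < δ ∧ ∀ i, δ ≤ b i - a i := by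
  rcases Nat.eq_zero_or_pos l with hl | hl
  · subst hl
    exact ⟨1, one_pos, fun i => i.elim0⟩
  · haveI : Nonempty (Fin l) := ⟨⟨0, hl⟩⟩
    obtain ⟨i₀, _, hmin⟩ := Finset.exists_min_image Finset.univ (fun i => b i - a i)
      ⟨Classical.arbitrary (Fin l), Finset.mem_univ _⟩
    exact ⟨b i₀ - a i₀, by linarith [hab i₀], fun i => hmin i (Finset.mem_univ i)⟩

lemma s6_short_subset {l : ℕ} {a b : Fin l → ℝ} {δ : ℝ} (hδi : ∀ i, δ ≤ b i - a i)
    {u v : ℝ} (hu : u ∈ flatComplR a b) (hv : v ∈ flatComplR a b) (huv : u ≤ v)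
    (hshort : v - u < δ) : Set.Icc u v ⊆ flatComplR a b := by
  intro w hw i n hwin
  have h1 : u ≤ a i + n := by
    by_contra hcon
    push_neg at hcon
    exact hu i n ⟨hcon, lt_of_le_of_lt hw.1 hwin.2⟩
  have h2 : b i + n ≤ v := by
    by_contra hcon
    push_neg at hcon
    exact hv i n ⟨lt_of_lt_of_le hwin.1 hw.2, hcon⟩
  linarith [hδi i]

lemma s6_periodic_recurrent {h : Circle1 → Circle1} {y : Circle1} {q : ℕ} (hq : 0 < q)
    (hy : h^[q] y = y) : IsRecurrentPt h y := by
  refine ⟨fun i => q * i, ?_, ?_⟩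
  · apply tendsto_atTop_mono (fun i => Nat.le_mul_of_pos_left i hq) tendsto_id
  · have : ∀ i, h^[q * i] y = y := by
      intro i
      rw [Function.iterate_mul]
      exact Function.iterate_fixed hy i
    simp only [this]
    exact tendsto_const_nhds

end Basics

section CaseR

lemma s6_step {l : ℕ} {a b : Fin l → ℝ} {ht : ℝ → ℝ} (hcont : Continuous ht)
    (hmono : Monotone ht) {D : ℝ → ℝ}
    (hD : ∀ x ∈ flatComplR a b, 1 < D x ∧ HasDerivWithinAt ht (D x) (flatComplR a b) x)
    {δ : ℝ} (hδi : ∀ i, δ ≤ b i - a i)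
    {u v : ℝ} (hu : u ∈ flatComplR a b) (hv : v ∈ flatComplR a b)
    (hne : u ≠ v) (hshort : |u - v| < δ) : |u - v| < |ht u - ht v| := by
  have main : ∀ u' v', u' ∈ flatComplR a b → v' ∈ flatComplR a b → u' < v' →
      v' - u' < δ → |u' - v'| < |ht u' - ht v'| := by
    intro u' v' hu' hv' hlt hsh
    have hsub := s6_short_subset hδi hu' hv' hlt.le hsh
    have hmvt := s6_mvt hcont hD u' v' hlt hsub
    have h1 : |u' - v'| = v' - u' := by rw [abs_sub_comm, abs_of_pos (by linarith)]
    have h2 : |ht u' - ht v'| = ht v' - ht u' := by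
      rw [abs_sub_comm, abs_of_nonneg (by linarith [hmono hlt.le] : (0:ℝ) ≤ ht v' - ht u')]
    rw [h1, h2]; linarith
  rcases lt_or_gt_of_ne hne with hlt | hgt
  · exact main u v hu hv hlt (by rwa [abs_sub_comm, abs_of_pos (by linarith)] at hshort)
  · rw [abs_sub_comm, abs_sub_comm (ht u)]
    exact main v u hv hu hgt (by rwa [abs_of_pos (by linarith)] at hshort)

lemma s6_tail {l : ℕ} {a b : Fin l → ℝ} {ht : ℝ → ℝ}
    (hsm : IsSemiMonotoneLift ht)
    {h : Circle1 → Circle1} (hlift : ∀ x, h (mk1 x) = mk1 (ht x))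
    {D : ℝ → ℝ}
    (hD : ∀ x ∈ flatComplR a b, 1 < D x ∧ HasDerivWithinAt ht (D x) (flatComplR a b) x)
    {δ : ℝ} (hδ : 0 < δ) (hδi : ∀ i, δ ≤ b i - a i)
    {x₀ : ℝ} (horb : ∀ n, ht^[n] x₀ ∈ flatComplR a b)
    {q : ℕ} (hq : 0 < q) {p : ℤ} {w : ℝ}
    (hw : ht^[q] w = w + p)
    (worb : ∀ j, ht^[j] w ∈ flatComplR a b)
    (hdec : ∀ n : ℕ, |ht^[(n+1)*q] x₀ - ht^[(n+1)*q] w| ≤ |ht^[n*q] x₀ - ht^[n*q] w|)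
    (hconv : ∀ i : ℕ, Tendsto (fun n : ℕ => |ht^[n*q + i] x₀ - ht^[n*q + i] w|) atTop (𝓝 0)) :
    ∃ n, IsRecurrentPt h (h^[n] (mk1 x₀)) := by
  obtain ⟨hcont, hmono, hdeg⟩ := hsm
  by_cases hzero : ∃ j, ht^[j] x₀ = ht^[j] w
  · obtain ⟨j, hj⟩ := hzero
    refine ⟨j, ?_⟩
    rw [s6_hlift_iter hlift, hj]
    apply s6_periodic_recurrent hq
    rw [s6_hlift_iter hlift]
    have hper : ht^[q] (ht^[j] w) = ht^[j] w + p := by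
      rw [← Function.iterate_add_apply, Nat.add_comm, Function.iterate_add_apply, hw,
        s6_iter_int hdeg]
    rw [hper, s6_mk1_int]
  · push_neg at hzero
    set e : ℕ → ℝ := fun j => |ht^[j] x₀ - ht^[j] w| with he
    have epos : ∀ j, 0 < e j := fun j => abs_pos.2 (sub_ne_zero.2 (hzero j))
    have step : ∀ j, e j < δ → e j < e (j+1) := by
      intro j hj
      have hs := s6_step hcont hmono hD hδi (horb j) (worb j) (hzero j) hj
      have h1 : ht^[j+1] x₀ = ht (ht^[j] x₀) := Function.iterate_succ_apply' ht j x₀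
      have h2 : ht^[j+1] w = ht (ht^[j] w) := Function.iterate_succ_apply' ht j w
      simp only [he, h1, h2]
      exact hs
    obtain ⟨N, hN⟩ : ∃ N, ∀ i ∈ Finset.range (q+1), e (N*q + i) < δ := by
      have hev : ∀ᶠ n in atTop, ∀ i ∈ Finset.range (q+1), e (n*q + i) < δ :=
        (eventually_all_finset _).2 (fun i _ => (hconv i).eventually_lt_const hδ)
      exact hev.exists
    have chain : ∀ i, i ≤ q → e (N*q) ≤ e (N*q + i) := by
      intro i hi
      induction i with
      | zero => simp
      | succ k ih =>
        have hk' : k ≤ q := Nat.le_of_succ_le hi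
        have h1 := ih hk'
        have h2 : e (N*q + k) < e (N*q + k + 1) :=
          step _ (hN k (Finset.mem_range.2 (Nat.lt_succ_of_le hk')))
        have h3 : N*q + (k+1) = N*q + k + 1 := by omega
        rw [h3]
        linarith
    have hfin : e (N*q) < e ((N+1)*q) := by
      have h1 : e (N*q) ≤ e (N*q + (q-1)) := chain _ (Nat.sub_le q 1)
      have h2 : e (N*q + (q-1)) < e (N*q + (q-1) + 1) :=
        step _ (hN (q-1) (Finset.mem_range.2 (Nat.lt_succ_of_le (Nat.sub_le q 1))))
      have h3 : N*q + (q-1) + 1 = (N+1)*q := by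
        have h4 : (q-1) + 1 = q := Nat.succ_pred_eq_of_pos hq
        calc N*q + (q-1) + 1 = N*q + ((q-1)+1) := by omega
          _ = N*q + q := by rw [h4]
          _ = (N+1)*q := by ring
      rw [h3] at h2
      linarith
    linarith [hdec N, hfin]

lemma s6_caseR {l : ℕ} {a b : Fin l → ℝ} {ht : ℝ → ℝ}
    (hsm : IsSemiMonotoneLift ht)
    {h : Circle1 → Circle1} (hlift : ∀ x, h (mk1 x) = mk1 (ht x))
    {D : ℝ → ℝ}
    (hD : ∀ x ∈ flatComplR a b, 1 < D x ∧ HasDerivWithinAt ht (D x) (flatComplR a b) x)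
    {δ : ℝ} (hδ : 0 < δ) (hδi : ∀ i, δ ≤ b i - a i)
    {x₀ : ℝ} (horb : ∀ n, ht^[n] x₀ ∈ flatComplR a b)
    {q : ℕ} {p : ℤ} {z : ℝ} (hq : 0 < q) (hz : ht^[q] z = z + p) :
    ∃ n, IsRecurrentPt h (h^[n] (mk1 x₀)) := by
  have hcont := hsm.1
  have hmono := hsm.2.1
  have hdeg := hsm.2.2
  set G : ℝ → ℝ := fun y => ht^[q] y - p with hG
  have Gmono : Monotone G := fun u v huv => sub_le_sub_right ((hmono.iterate q) huv) _
  have Gcont : Continuous G := (hcont.iterate q).sub continuous_const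
  have Gfix : ∀ j : ℤ, G (z + j) = z + j := by
    intro j
    simp only [hG]
    rw [s6_iter_int hdeg, hz]
    push_cast
    ring
  have Giter : ∀ n : ℕ, G^[n] x₀ = ht^[n*q] x₀ - ((n : ℤ) * p : ℤ) := by
    intro n
    induction n with
    | zero => simp
    | succ k ih =>
      rw [Function.iterate_succ_apply', ih]
      simp only [hG]
      rw [show ht^[k*q] x₀ - (((k : ℤ) * p : ℤ) : ℝ) = ht^[k*q] x₀ + ((-((k:ℤ) * p) : ℤ) : ℝ) by push_cast; ring,
        s6_iter_int hdeg, ← Function.iterate_add_apply]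
      have : q + k * q = (k+1)*q := by ring
      rw [this]
      push_cast
      ring
  -- decompose the full orbit relative to a fixed point w of G
  have TAIL : ∀ w : ℝ, G w = w → Tendsto (fun n => G^[n] x₀) atTop (𝓝 w) →
      (∀ n : ℕ, |G^[n+1] x₀ - w| ≤ |G^[n] x₀ - w|) →
      ∃ n, IsRecurrentPt h (h^[n] (mk1 x₀)) := by
    intro w hGw htend hmdec
    have hwq : ht^[q] w = w + (p : ℝ) := by
      have h0 := hGw
      simp only [hG] at h0
      linarith
    have hwn : ∀ n : ℕ, ht^[n*q] w = w + (((n : ℤ) * p : ℤ) : ℝ) := by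
      intro n
      induction n with
      | zero => simp
      | succ k ih =>
        have h5 : (k+1)*q = k*q + q := by ring
        rw [h5, Function.iterate_add_apply, hwq,
          show w + (p:ℝ) = w + ((p : ℤ) : ℝ) by norm_num,
          s6_iter_int hdeg (k*q) w p, ih]
        push_cast
        ring
    have comp : ∀ n i : ℕ, ht^[n*q + i] x₀ - ht^[n*q + i] w = ht^[i] (G^[n] x₀) - ht^[i] w := by
      intro n i
      have hco : n*q + i = i + n*q := Nat.add_comm _ _
      rw [hco]
      have hgx : ht^[n*q] x₀ = G^[n] x₀ + (((n:ℤ)*p : ℤ) : ℝ) := by rw [Giter]; ring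
      have hx : ht^[i + n*q] x₀ = ht^[i] (G^[n] x₀) + (((n:ℤ)*p : ℤ) : ℝ) := by
        rw [Function.iterate_add_apply, hgx, s6_iter_int hdeg]
      have hw2 : ht^[i + n*q] w = ht^[i] w + (((n:ℤ)*p : ℤ) : ℝ) := by
        rw [Function.iterate_add_apply, hwn n,
          show w + (((n:ℤ)*p : ℤ) : ℝ) = w + (((n:ℤ)*p : ℤ) : ℝ) from rfl,
          s6_iter_int hdeg]
      rw [hx, hw2]
      ring
    have worb : ∀ j', ht^[j'] w ∈ flatComplR a b := by
      intro j'
      have ht1 : Tendsto (fun n => ht^[j'] (G^[n] x₀)) atTop (𝓝 (ht^[j'] w)) :=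
        ((hcont.iterate j').continuousAt.tendsto).comp htend
      refine (s6_flatR_closed a b).mem_of_tendsto ht1 (Filter.Eventually.of_forall (fun n => ?_))
      have hgx : G^[n] x₀ = ht^[n*q] x₀ + ((-((n:ℤ)*p) : ℤ):ℝ) := by
        rw [Giter]; push_cast; ring
      have : ht^[j'] (G^[n] x₀) = ht^[j' + n*q] x₀ + ((-((n:ℤ)*p) : ℤ) : ℝ) := by
        rw [hgx, s6_iter_int hdeg, Function.iterate_add_apply]
      rw [this]
      exact s6_flatR_int (horb _) _
    have hdec : ∀ n : ℕ, |ht^[(n+1)*q] x₀ - ht^[(n+1)*q] w| ≤ |ht^[n*q] x₀ - ht^[n*q] w| := by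
      intro n
      have c1 := comp n 0
      have c2 := comp (n+1) 0
      simp only [Nat.add_zero, Function.iterate_zero_apply] at c1 c2
      rw [c1, c2]
      exact hmdec n
    have hconv : ∀ i : ℕ, Tendsto (fun n : ℕ => |ht^[n*q + i] x₀ - ht^[n*q + i] w|) atTop (𝓝 0) := by
      intro i
      have t0 : Tendsto (fun n => ht^[i] (G^[n] x₀) - ht^[i] w) atTop (𝓝 (ht^[i] w - ht^[i] w)) :=
        (((hcont.iterate i).continuousAt.tendsto).comp htend).sub tendsto_const_nhds
      rw [sub_self] at t0
      have t1 := t0.abs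
      rw [abs_zero] at t1
      exact t1.congr (fun n => (congrArg abs (comp n i)).symm)
    exact s6_tail ⟨hcont, hmono, hdeg⟩ hlift hD hδ hδi horb hq hwq worb hdec hconv
  rcases lt_trichotomy x₀ (G x₀) with hlt | heq | hgt
  · have mono : Monotone (fun n => G^[n] x₀) := monotone_nat_of_le_succ (fun n => by
      rw [Function.iterate_succ_apply]
      exact (Gmono.iterate n) hlt.le)
    set j : ℤ := ⌈x₀ - z⌉ with hj
    have hub : ∀ n, G^[n] x₀ ≤ z + j := by
      intro n
      calc G^[n] x₀ ≤ G^[n] (z + j) := (Gmono.iterate n) (by linarith [Int.le_ceil (x₀ - z)])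
        _ = z + j := Function.iterate_fixed (Gfix j) n
    have bdd : BddAbove (Set.range (fun n => G^[n] x₀)) :=
      ⟨z + j, by rintro y ⟨n, rfl⟩; exact hub n⟩
    set w := ⨆ n, G^[n] x₀ with hw
    have htend : Tendsto (fun n => G^[n] x₀) atTop (𝓝 w) := tendsto_atTop_ciSup mono bdd
    have le_w : ∀ n, G^[n] x₀ ≤ w := fun n => le_ciSup bdd n
    have hGw : G w = w := by
      have h1 : Tendsto (fun n => G (G^[n] x₀)) atTop (𝓝 (G w)) :=
        (Gcont.continuousAt.tendsto).comp htend
      have h2 : Tendsto (fun n => G (G^[n] x₀)) atTop (𝓝 w) := by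
        have heq2 : (fun n => G (G^[n] x₀)) = fun n => G^[n+1] x₀ :=
          funext fun n => (Function.iterate_succ_apply' G n x₀).symm
        rw [heq2]
        exact htend.comp (tendsto_add_atTop_nat 1)
      exact tendsto_nhds_unique h1 h2
    refine TAIL w hGw htend (fun n => ?_)
    rw [abs_of_nonpos (by linarith [le_w (n+1)] : G^[n+1] x₀ - w ≤ 0),
      abs_of_nonpos (by linarith [le_w n] : G^[n] x₀ - w ≤ 0)]
    have hmn := mono (Nat.le_succ n)
    simp only at hmn
    linarith
  · refine ⟨0, ?_⟩
    simp only [Function.iterate_zero_apply]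
    apply s6_periodic_recurrent hq
    rw [s6_hlift_iter hlift]
    have h0 : ht^[q] x₀ = x₀ + ((p:ℤ) : ℝ) := by
      simp only [hG] at heq
      linarith
    rw [h0, s6_mk1_int]
  · have mono : Antitone (fun n => G^[n] x₀) := antitone_nat_of_succ_le (fun n => by
      rw [Function.iterate_succ_apply]
      exact (Gmono.iterate n) hgt.le)
    set j : ℤ := ⌊x₀ - z⌋ with hj
    have hlb : ∀ n, z + j ≤ G^[n] x₀ := by
      intro n
      calc (z : ℝ) + j = G^[n] (z + j) := (Function.iterate_fixed (Gfix j) n).symm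
        _ ≤ G^[n] x₀ := (Gmono.iterate n) (by linarith [Int.floor_le (x₀ - z)])
    have bdd : BddBelow (Set.range (fun n => G^[n] x₀)) :=
      ⟨z + j, by rintro y ⟨n, rfl⟩; exact hlb n⟩
    set w := ⨅ n, G^[n] x₀ with hw
    have htend : Tendsto (fun n => G^[n] x₀) atTop (𝓝 w) := tendsto_atTop_ciInf mono bdd
    have le_w : ∀ n, w ≤ G^[n] x₀ := fun n => ciInf_le bdd n
    have hGw : G w = w := by
      have h1 : Tendsto (fun n => G (G^[n] x₀)) atTop (𝓝 (G w)) :=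
        (Gcont.continuousAt.tendsto).comp htend
      have h2 : Tendsto (fun n => G (G^[n] x₀)) atTop (𝓝 w) := by
        have heq2 : (fun n => G (G^[n] x₀)) = fun n => G^[n+1] x₀ :=
          funext fun n => (Function.iterate_succ_apply' G n x₀).symm
        rw [heq2]
        exact htend.comp (tendsto_add_atTop_nat 1)
      exact tendsto_nhds_unique h1 h2
    refine TAIL w hGw htend (fun n => ?_)
    rw [abs_of_nonneg (by linarith [le_w (n+1)] : (0:ℝ) ≤ G^[n+1] x₀ - w),
      abs_of_nonneg (by linarith [le_w n] : (0:ℝ) ≤ G^[n] x₀ - w)]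
    have hmn := mono (Nat.le_succ n)
    simp only at hmn
    linarith

end CaseR

section CaseI

lemma s6_caseI {l : ℕ} {a b : Fin l → ℝ} {ht : ℝ → ℝ}
    (hsm : IsSemiMonotoneLift ht)
    {h : Circle1 → Circle1} (hlift : ∀ x, h (mk1 x) = mk1 (ht x))
    {D : ℝ → ℝ}
    (hD : ∀ x ∈ flatComplR a b, 1 < D x ∧ HasDerivWithinAt ht (D x) (flatComplR a b) x)
    (hab : ∀ i, a i < b i)
    {x₀ : ℝ} (horb : ∀ n, ht^[n] x₀ ∈ flatComplR a b)
    (hnoper : ¬ ∃ (q : ℕ) (p : ℤ) (z : ℝ), 0 < q ∧ ht^[q] z = z + p) :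
    ∃ n, IsRecurrentPt h (h^[n] (mk1 x₀)) := by
  classical
  have hcont := hsm.1
  have hmono := hsm.2.1
  have hdeg := hsm.2.2
  set X : ℕ → ℝ := fun n => ht^[n] x₀ with hX
  set S : ℕ → Set ℝ := fun N => {u | ∃ m, N ≤ m ∧ ∃ p : ℤ, u = X m - p} with hS
  set Om : Set ℝ := ⋂ N, closure (S N) with hOm
  have hOmclosed : IsClosed Om := isClosed_iInter fun _ => isClosed_closure
  have memOm : ∀ u : ℝ, u ∈ Om ↔ ∀ N, u ∈ closure (S N) := fun u => Set.mem_iInter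
  have hSmem : ∀ (N m : ℕ) (p : ℤ), N ≤ m → X m - p ∈ S N := fun N m p hm => ⟨m, hm, p, rfl⟩
  have hOm_shift : ∀ u ∈ Om, ∀ p : ℤ, u + p ∈ Om := by
    intro u hu p
    rw [memOm]
    intro N
    rw [Metric.mem_closure_iff]
    intro ε hε
    obtain ⟨v, hv, hdist⟩ := Metric.mem_closure_iff.1 ((memOm u).1 hu N) ε hε
    obtain ⟨m, hm, p', rfl⟩ := hv
    refine ⟨X m - ((p' - p : ℤ) : ℝ), hSmem N m _ hm, ?_⟩
    rw [Real.dist_eq] at hdist ⊢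
    have he : u + (p:ℝ) - (X m - ((p' - p : ℤ) : ℝ)) = u - (X m - p') := by push_cast; ring
    rw [he]
    exact hdist
  have hOm_ht : ∀ u ∈ Om, ht u ∈ Om := by
    intro u hu
    rw [memOm]
    intro N
    rw [Metric.mem_closure_iff]
    intro ε hε
    obtain ⟨δ', hδ', hcd⟩ := Metric.continuous_iff.1 hcont u ε hε
    obtain ⟨v, hv, hdist⟩ := Metric.mem_closure_iff.1 ((memOm u).1 hu N) δ' hδ'
    obtain ⟨m, hm, p', rfl⟩ := hv
    refine ⟨X (m+1) - p', hSmem N (m+1) p' (le_trans hm (Nat.le_succ m)), ?_⟩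
    have hXm : ht (X m - p') = X (m+1) - (p' : ℝ) := by
      have h1 : X m - (p' : ℝ) = X m + ((-p' : ℤ) : ℝ) := by push_cast; ring
      rw [h1, s6_ht_int hdeg]
      have h2 : X (m+1) = ht (X m) := Function.iterate_succ_apply' ht m x₀
      rw [h2]
      push_cast
      ring
    rw [← hXm]
    have := hcd (X m - p') (by rw [dist_comm]; exact hdist)
    rwa [dist_comm]
  have hOm_flat : ∀ u ∈ Om, u ∈ flatComplR a b := by
    intro u hu
    have h0 : u ∈ closure (S 0) := (memOm u).1 hu 0
    have hsub : S 0 ⊆ flatComplR a b := by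
      rintro v ⟨m, _, p', rfl⟩
      have := s6_flatR_int (horb m) (-p')
      have he : X m - (p' : ℝ) = ht^[m] x₀ + ((-p' : ℤ) : ℝ) := by push_cast [hX]; ring
      rw [he]
      exact this
    exact closure_minimal hsub (s6_flatR_closed a b) h0
  have hOmne : Om.Nonempty := by
    have hne : ∀ N : ℕ, (closure (S N) ∩ Set.Icc (0:ℝ) 1).Nonempty := by
      intro N
      refine ⟨Int.fract (X N), subset_closure ⟨N, le_refl N, ⌊X N⌋, rfl⟩, ?_⟩
      exact ⟨Int.fract_nonneg _, (Int.fract_lt_one _).le⟩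
    have hnest : ∀ N : ℕ, closure (S (N+1)) ∩ Set.Icc (0:ℝ) 1 ⊆ closure (S N) ∩ Set.Icc (0:ℝ) 1 := by
      intro N
      apply Set.inter_subset_inter_left
      apply closure_mono
      rintro v ⟨m, hm, p', rfl⟩
      exact ⟨m, le_trans (Nat.le_succ N) hm, p', rfl⟩
    obtain ⟨u, hu⟩ := IsCompact.nonempty_iInter_of_sequence_nonempty_isCompact_isClosed
      (fun N => closure (S N) ∩ Set.Icc (0:ℝ) 1) hnest hne
      (isCompact_Icc.inter_left isClosed_closure)
      (fun N => isClosed_closure.inter isClosed_Icc)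
    exact ⟨u, (memOm u).2 (fun N => (Set.mem_iInter.1 hu N).1)⟩
  obtain ⟨ω₀, hω₀⟩ := hOmne
  by_cases hland : ∃ n, X n ∈ Om
  · obtain ⟨n, hn⟩ := hland
    refine ⟨n, ?_⟩
    have hsel : ∀ i : ℕ, ∃ m : ℕ, ∃ p : ℤ, n + 1 + i ≤ m ∧ |X n - (X m - p)| < 1/(i+1) := by
      intro i
      obtain ⟨v, ⟨m, hm, p, rfl⟩, hdist⟩ :=
        Metric.mem_closure_iff.1 ((memOm (X n)).1 hn (n+1+i)) (1/(i+1)) (by positivity)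
      exact ⟨m, p, hm, by rwa [Real.dist_eq] at hdist⟩
    choose m p hm hdist using hsel
    have hpt : h^[n] (mk1 x₀) = mk1 (X n) := s6_hlift_iter hlift n x₀
    refine ⟨fun i => m i - n, ?_, ?_⟩
    · exact tendsto_atTop_mono (fun i => by have := hm i; omega) (tendsto_add_atTop_nat 1)
    · have hXconv : Tendsto (fun i => X (m i) - (p i : ℝ)) atTop (𝓝 (X n)) := by
        rw [tendsto_iff_dist_tendsto_zero]
        refine squeeze_zero (fun i => dist_nonneg) (fun i => ?_)
          tendsto_one_div_add_atTop_nhds_zero_nat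
        rw [Real.dist_eq, abs_sub_comm]
        exact (hdist i).le
      have hcirc : Tendsto (fun i => mk1 (X (m i))) atTop (𝓝 (mk1 (X n))) := by
        have hcomp := (s6_mk1_cont.continuousAt.tendsto).comp hXconv
        refine hcomp.congr (fun i => ?_)
        show mk1 (X (m i) - p i) = mk1 (X (m i))
        have h1 : X (m i) = (X (m i) - p i) + (p i : ℝ) := by ring
        conv_rhs => rw [h1]
        exact (s6_mk1_int _ _).symm
      rw [hpt]
      refine hcirc.congr (fun i => ?_)
      have h2 : h^[m i - n] (mk1 (X n)) = mk1 (ht^[m i - n] (X n)) := s6_hlift_iter hlift _ _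
      have h3 : ht^[m i - n] (X n) = X (m i) := by
        show ht^[m i - n] (ht^[n] x₀) = ht^[m i] x₀
        rw [← Function.iterate_add_apply]
        congr 1
        have := hm i
        omega
      rw [h2, h3]
  · push_neg at hland
    set al : ℕ → ℝ := fun n => sSup (Om ∩ Set.Iic (X n)) with hal
    set be : ℕ → ℝ := fun n => sInf (Om ∩ Set.Ici (X n)) with hbe
    have hlow : ∀ n, (Om ∩ Set.Iic (X n)).Nonempty := by
      intro n
      refine ⟨ω₀ + ⌊X n - ω₀⌋, hOm_shift ω₀ hω₀ _, ?_⟩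
      simp only [Set.mem_Iic]
      linarith [Int.floor_le (X n - ω₀)]
    have hhigh : ∀ n, (Om ∩ Set.Ici (X n)).Nonempty := by
      intro n
      refine ⟨ω₀ + ⌈X n - ω₀⌉, hOm_shift ω₀ hω₀ _, ?_⟩
      simp only [Set.mem_Ici]
      linarith [Int.le_ceil (X n - ω₀)]
    have hbddA : ∀ n, BddAbove (Om ∩ Set.Iic (X n)) := fun n => ⟨X n, fun u hu => hu.2⟩
    have hbddB : ∀ n, BddBelow (Om ∩ Set.Ici (X n)) := fun n => ⟨X n, fun u hu => hu.2⟩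
    have hal_mem : ∀ n, al n ∈ Om ∩ Set.Iic (X n) := fun n =>
      (hOmclosed.inter isClosed_Iic).csSup_mem (hlow n) (hbddA n)
    have hbe_mem : ∀ n, be n ∈ Om ∩ Set.Ici (X n) := fun n =>
      (hOmclosed.inter isClosed_Ici).csInf_mem (hhigh n) (hbddB n)
    have hal_le : ∀ n, al n ≤ X n := fun n => Set.mem_Iic.1 (hal_mem n).2
    have hbe_le : ∀ n, X n ≤ be n := fun n => Set.mem_Ici.1 (hbe_mem n).2
    have hal_lt : ∀ n, al n < X n := by
      intro n
      rcases eq_or_lt_of_le (hal_le n) with h1 | h1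
      · exact absurd (h1 ▸ (hal_mem n).1) (hland n)
      · exact h1
    have hbe_gt : ∀ n, X n < be n := by
      intro n
      rcases eq_or_lt_of_le (hbe_le n) with h1 | h1
      · exact absurd (by rw [h1]; exact (hbe_mem n).1) (hland n)
      · exact h1
    have hgapfree : ∀ n, ∀ w ∈ Om, w ∉ Set.Ioo (al n) (be n) := by
      rintro n w hw ⟨hw1, hw2⟩
      rcases lt_trichotomy w (X n) with hlt | heq | hgt
      · exact absurd (le_csSup (hbddA n) ⟨hw, Set.mem_Iic.2 hlt.le⟩) (not_le.2 hw1)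
      · exact hland n (heq ▸ hw)
      · exact absurd (csInf_le (hbddB n) ⟨hw, Set.mem_Ici.2 hgt.le⟩) (not_le.2 hw2)
    have hlen : ∀ n, be n ≤ al n + 1 := by
      intro n
      have h1 : al n + (1:ℝ) ∈ Om := by
        have := hOm_shift (al n) (hal_mem n).1 1
        simpa using this
      rcases le_or_gt (X n) (al n + 1) with hle | hlt
      · exact csInf_le (hbddB n) ⟨h1, Set.mem_Ici.2 hle⟩
      · exact absurd (le_csSup (hbddA n) ⟨h1, Set.mem_Iic.2 hlt.le⟩) (by linarith)
    have hstep : ∀ n, al (n+1) = ht (al n) ∧ be (n+1) = ht (be n) := by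
      intro n
      have hXsucc : X (n+1) = ht (X n) := Function.iterate_succ_apply' ht n x₀
      have noMid : ∀ ω ∈ Om, ω ∉ Set.Ioo (ht (al n)) (ht (be n)) := by
        rintro ω hω ⟨hω1, hω2⟩
        set ε := min (ω - ht (al n)) (ht (be n) - ω) with hε
        have hεpos : 0 < ε := lt_min (by linarith) (by linarith)
        have hεle1 : ε ≤ ω - ht (al n) := min_le_left _ _
        have hεle2 : ε ≤ ht (be n) - ω := min_le_right _ _
        have hsel : ∀ i : ℕ, ∃ m' : ℕ, ∃ p' : ℤ,
            i + 1 ≤ m' ∧ |ω - (X m' - p')| < min ε (1/(i+1)) := by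
          intro i
          obtain ⟨v, ⟨m', hm', p', rfl⟩, hdist⟩ :=
            Metric.mem_closure_iff.1 ((memOm ω).1 hω (i+1)) (min ε (1/(i+1)))
              (lt_min hεpos (by positivity))
          exact ⟨m', p', hm', by rwa [Real.dist_eq] at hdist⟩
        choose m' p' hm' hdist using hsel
        set v : ℕ → ℝ := fun i => X (m' i - 1) - p' i with hv
        have hvim : ∀ i, ht (v i) = X (m' i) - p' i := by
          intro i
          show ht (X (m' i - 1) - p' i) = X (m' i) - p' i
          have e1 : X (m' i - 1) - (p' i : ℝ) = X (m' i - 1) + ((-p' i : ℤ) : ℝ) := by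
            push_cast; ring
          rw [e1, s6_ht_int hdeg]
          have e2 : ht (X (m' i - 1)) = X (m' i) := by
            show ht (ht^[m' i - 1] x₀) = ht^[m' i] x₀
            have e3 : ht^[(m' i - 1)+1] x₀ = ht (ht^[m' i - 1] x₀) :=
              Function.iterate_succ_apply' ht _ _
            have e4 : (m' i - 1) + 1 = m' i := by
              have := hm' i
              omega
            rw [e4] at e3
            exact e3.symm
          rw [e2]
          push_cast
          ring
        have hmemIoo : ∀ i, X (m' i) - (p' i : ℝ) ∈ Set.Ioo (ht (al n)) (ht (be n)) := by
          intro i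
          have hd := (hdist i).trans_le (min_le_left _ _)
          have h1 := abs_lt.1 hd
          exact ⟨by linarith [h1.2], by linarith [h1.1]⟩
        have hvIoo : ∀ i, v i ∈ Set.Ioo (al n) (be n) := by
          intro i
          constructor
          · by_contra hcon
            push_neg at hcon
            have := hmono hcon
            rw [hvim i] at this
            linarith [(hmemIoo i).1]
          · by_contra hcon
            push_neg at hcon
            have := hmono hcon
            rw [hvim i] at this
            linarith [(hmemIoo i).2]
        obtain ⟨w, hwcl, φ, hφ, hconv⟩ := tendsto_subseq_of_bounded
          (Metric.isBounded_Icc (al n) (be n))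
          (fun i => Set.mem_Icc_of_Ioo (hvIoo i))
        rw [isClosed_Icc.closure_eq] at hwcl
        have hwOm : w ∈ Om := by
          rw [memOm]
          intro N
          refine mem_closure_of_tendsto hconv (Filter.eventually_atTop.2 ⟨N, fun i hi => ?_⟩)
          show v (φ i) ∈ S N
          refine ⟨m' (φ i) - 1, ?_, p' (φ i), rfl⟩
          have h1 := hm' (φ i)
          have h2 : i ≤ φ i := hφ.le_apply
          omega
        have ht1 : Tendsto (fun i => ht (v (φ i))) atTop (𝓝 (ht w)) :=
          (hcont.continuousAt.tendsto).comp hconv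
        have ht2 : Tendsto (fun i => ht (v (φ i))) atTop (𝓝 ω) := by
          have base : Tendsto (fun i => X (m' (φ i)) - (p' (φ i) : ℝ)) atTop (𝓝 ω) := by
            rw [tendsto_iff_dist_tendsto_zero]
            refine squeeze_zero (fun i => dist_nonneg) (fun i => ?_)
              tendsto_one_div_add_atTop_nhds_zero_nat
            rw [Real.dist_eq, abs_sub_comm]
            have hd := (hdist (φ i)).trans_le (min_le_right _ _)
            have hmono2 : (1:ℝ)/(φ i + 1) ≤ 1/(i+1) := by
              apply one_div_le_one_div_of_le (by positivity)
              have h2 : i ≤ φ i := hφ.le_apply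
              push_cast
              exact by exact_mod_cast add_le_add_left (Nat.cast_le.2 h2) 1
            linarith
          exact base.congr (fun i => (hvim (φ i)).symm)
        have hωw : ω = ht w := tendsto_nhds_unique ht2 ht1
        have hwend : w = al n ∨ w = be n := by
          rcases eq_or_lt_of_le hwcl.1 with h1 | h1
          · exact Or.inl h1.symm
          rcases eq_or_lt_of_le hwcl.2 with h2 | h2
          · exact Or.inr h2
          · exact absurd ⟨h1, h2⟩ (hgapfree n w hwOm)
        rcases hwend with hend | hend
        · rw [hend] at hωw
          linarith
        · rw [hend] at hωw
          linarith
      have h_htal : ht (al n) ∈ Om := hOm_ht _ (hal_mem n).1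
      have h_htbe : ht (be n) ∈ Om := hOm_ht _ (hbe_mem n).1
      have hXin : X (n+1) ∈ Set.Ioo (ht (al n)) (ht (be n)) := by
        have hle1 : ht (al n) ≤ X (n+1) := by rw [hXsucc]; exact hmono (hal_lt n).le
        have hne1 : ht (al n) ≠ X (n+1) := fun hcon => hland (n+1) (by rw [← hcon]; exact h_htal)
        have hle2 : X (n+1) ≤ ht (be n) := by rw [hXsucc]; exact hmono (hbe_gt n).le
        have hne2 : X (n+1) ≠ ht (be n) := fun hcon => hland (n+1) (by rw [hcon]; exact h_htbe)
        exact ⟨lt_of_le_of_ne hle1 hne1, lt_of_le_of_ne hle2 hne2⟩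
      constructor
      · apply le_antisymm
        · by_contra hcon
          push_neg at hcon
          have h1 : al (n+1) ∈ Set.Ioo (ht (al n)) (ht (be n)) :=
            ⟨hcon, lt_trans (hal_lt (n+1)) hXin.2⟩
          exact noMid _ (hal_mem (n+1)).1 h1
        · exact le_csSup (hbddA (n+1)) ⟨h_htal, Set.mem_Iic.2 hXin.1.le⟩
      · apply le_antisymm
        · exact csInf_le (hbddB (n+1)) ⟨h_htbe, Set.mem_Ici.2 hXin.2.le⟩
        · by_contra hcon
          push_neg at hcon
          have h1 : be (n+1) ∈ Set.Ioo (ht (al n)) (ht (be n)) :=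
            ⟨lt_trans hXin.1 (hbe_gt (n+1)), hcon⟩
          exact noMid _ (hbe_mem (n+1)).1 h1
    exfalso
    have hal_iter : ∀ n k : ℕ, al (n+k) = ht^[k] (al n) := by
      intro n k
      induction k with
      | zero => simp
      | succ j ih =>
        have h1 : n + (j+1) = (n+j) + 1 := by omega
        rw [h1, (hstep (n+j)).1, ih]
        exact (Function.iterate_succ_apply' ht j (al n)).symm
    have hnorep : ∀ n m : ℕ, n < m → ∀ p : ℤ, al m ≠ al n + p := by
      intro n m hnm p hcon
      apply hnoper
      refine ⟨m - n, p, al n, by omega, ?_⟩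
      have h1 := hal_iter n (m-n)
      rw [show n + (m-n) = m by omega] at h1
      rw [← h1, hcon]
    have hgap_eq : ∀ n m : ℕ, ∀ p : ℤ,
        (Set.Ioo (al n + (p:ℝ)) (be n + (p:ℝ)) ∩ Set.Ioo (al m) (be m)).Nonempty →
        al m = al n + p := by
      rintro n m p ⟨t, ⟨ht1, ht2⟩, ht3, ht4⟩
      have htrans_free : ∀ w ∈ Om, w ∉ Set.Ioo (al n + (p:ℝ)) (be n + (p:ℝ)) := by
        rintro w hw ⟨hw1, hw2⟩
        have hwm : w + ((-p : ℤ) : ℝ) ∈ Om := hOm_shift w hw (-p)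
        refine hgapfree n _ hwm ⟨?_, ?_⟩ <;> push_cast <;> linarith
      have hanp : al n + (p:ℝ) ∈ Om := hOm_shift _ (hal_mem n).1 p
      rcases lt_trichotomy (al m) (al n + (p:ℝ)) with h1 | h1 | h1
      · exact absurd (⟨h1, lt_trans ht1 ht4⟩ : al n + (p:ℝ) ∈ Set.Ioo (al m) (be m))
          (hgapfree m _ hanp)
      · exact h1
      · exact absurd (⟨h1, lt_trans ht3 ht2⟩ : al m ∈ Set.Ioo (al n + (p:ℝ)) (be n + (p:ℝ)))
          (htrans_free _ (hal_mem m).1)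
    have hgap_disj : ∀ n m : ℕ, n ≠ m → ∀ p : ℤ,
        ¬ (Set.Ioo (al n + (p:ℝ)) (be n + (p:ℝ)) ∩ Set.Ioo (al m) (be m)).Nonempty := by
      intro n m hnm p hne
      have heq := hgap_eq n m p hne
      rcases Nat.lt_or_ge n m with hlt | hge
      · exact hnorep n m hlt p heq
      · have hlt' : m < n := by omega
        exact hnorep m n hlt' (-p) (by push_cast; linarith)
    set Bad : Set ℕ :=
      {n | ∃ (i : Fin l) (k : ℤ),
        (Set.Ioo (a i + (k:ℝ)) (b i + (k:ℝ)) ∩ Set.Ioo (al n) (be n)).Nonempty} with hBad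
    have hflat_sub : ∀ (n : ℕ) (i : Fin l) (k : ℤ),
        (Set.Ioo (a i + (k:ℝ)) (b i + (k:ℝ)) ∩ Set.Ioo (al n) (be n)).Nonempty →
        Set.Ioo (a i + (k:ℝ)) (b i + (k:ℝ)) ⊆ Set.Ioo (al n) (be n) := by
      rintro n i k ⟨t, ⟨ht1, ht2⟩, ht3, ht4⟩
      have hOmfree : ∀ w ∈ Om, w ∉ Set.Ioo (a i + (k:ℝ)) (b i + (k:ℝ)) :=
        fun w hw hcon => (hOm_flat _ hw) i k hcon
      have h1 : al n ≤ a i + (k:ℝ) := by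
        by_contra hcon
        push_neg at hcon
        exact hOmfree _ (hal_mem n).1 ⟨hcon, lt_trans ht3 ht2⟩
      have h2 : b i + (k:ℝ) ≤ be n := by
        by_contra hcon
        push_neg at hcon
        exact hOmfree _ (hbe_mem n).1 ⟨lt_trans ht1 ht4, hcon⟩
      rintro u ⟨hu1, hu2⟩
      exact ⟨lt_of_le_of_lt h1 hu1, lt_of_lt_of_le hu2 h2⟩
    have hBadchoice : ∀ n ∈ Bad, ∃ (i : Fin l) (k : ℤ),
        Set.Ioo (a i + (k:ℝ)) (b i + (k:ℝ)) ⊆ Set.Ioo (al n) (be n) := by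
      rintro n ⟨i, k, hne⟩
      exact ⟨i, k, hflat_sub n i k hne⟩
    have hBadfin : Bad.Finite := by
      choose fi fk hfik using hBadchoice
      have hinj : Function.Injective (fun n : Bad => fi n n.2) := by
        intro n m hfeq
        by_contra hne
        have hne' : (n : ℕ) ≠ (m : ℕ) := fun hc => hne (Subtype.ext hc)
        simp only at hfeq
        set i := fi n n.2 with hi
        set k₁ := fk n n.2 with hk₁
        set k₂ := fk m m.2 with hk₂
        have h1 := hfik n n.2
        have h2 := hfik m m.2
        rw [← hfeq] at h2
        have hsub2 : Set.Ioo (a i + (k₂:ℝ)) (b i + (k₂:ℝ)) ⊆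
            Set.Ioo (al n + ((k₂ - k₁ : ℤ):ℝ)) (be n + ((k₂ - k₁ : ℤ):ℝ)) := by
          intro u hu
          have hu' : u - ((k₂ - k₁ : ℤ):ℝ) ∈ Set.Ioo (a i + (k₁:ℝ)) (b i + (k₁:ℝ)) := by
            constructor <;> push_cast <;> [linarith [hu.1]; linarith [hu.2]]
          have := h1 hu'
          constructor <;> [linarith [this.1]; linarith [this.2]]
        have hwit : (Set.Ioo (al n + ((k₂ - k₁ : ℤ):ℝ)) (be n + ((k₂ - k₁ : ℤ):ℝ)) ∩
            Set.Ioo (al m) (be m)).Nonempty := by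
          refine ⟨(a i + (k₂:ℝ) + (b i + (k₂:ℝ)))/2, ?_, ?_⟩
          · apply hsub2
            constructor <;> [linarith [hab i]; linarith [hab i]]
          · apply h2
            constructor <;> [linarith [hab i]; linarith [hab i]]
        exact hgap_disj n m hne' (k₂ - k₁) hwit
      have : Finite Bad := Finite.of_injective _ hinj
      exact Set.finite_coe_iff.1 this
    obtain ⟨N', hN'⟩ := hBadfin.bddAbove
    set N₀ : ℕ := N' + 1 with hN₀
    have hcleanN : ∀ n, N₀ ≤ n → n ∉ Bad := by
      intro n hn hcon
      have := hN' hcon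
      omega
    have hgapR : ∀ n, N₀ ≤ n → Set.Icc (al n) (be n) ⊆ flatComplR a b := by
      intro n hn u hu i k hcon
      rcases eq_or_lt_of_le hu.1 with h1 | h1
      · exact (hOm_flat _ (hal_mem n).1) i k (by rwa [← h1] at hcon)
      rcases eq_or_lt_of_le hu.2 with h2 | h2
      · exact (hOm_flat _ (hbe_mem n).1) i k (by rwa [h2] at hcon)
      · exact hcleanN n hn ⟨i, k, ⟨u, hcon, h1, h2⟩⟩
    have hgrow : ∀ n, N₀ ≤ n → be n - al n < be (n+1) - al (n+1) := by
      intro n hn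
      have h1 := s6_mvt hcont hD (al n) (be n) (lt_trans (hal_lt n) (hbe_gt n)) (hgapR n hn)
      rw [(hstep n).1, (hstep n).2]
      linarith
    have hclow : ∀ j : ℕ, be N₀ - al N₀ ≤ be (N₀ + j) - al (N₀ + j) := by
      intro j
      induction j with
      | zero => simp
      | succ k ih =>
        have hg := hgrow (N₀ + k) (by omega)
        have h2 : N₀ + (k+1) = (N₀ + k) + 1 := by omega
        rw [h2]
        linarith
    set c : ℝ := be N₀ - al N₀ with hc
    have hcpos : 0 < c := by
      have h1 := hal_lt N₀
      have h2 := hbe_gt N₀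
      simp only [hc]
      linarith
    set mid : ℕ → ℝ := fun n => (al n + be n)/2 with hmid
    set f : ℕ → ℝ := fun j => Int.fract (mid (N₀ + j)) with hf
    have hfmem : ∀ j, f j ∈ Set.Icc (0:ℝ) 1 := fun j =>
      ⟨Int.fract_nonneg _, (Int.fract_lt_one _).le⟩
    obtain ⟨L, _, φ, hφ, hLconv⟩ :=
      tendsto_subseq_of_bounded (Metric.isBounded_Icc (0:ℝ) 1) hfmem
    obtain ⟨Ni, hNi⟩ := Metric.tendsto_atTop.1 hLconv (c/4) (by linarith)
    have hd2 : |f (φ Ni) - f (φ (Ni+1))| < c/2 := by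
      have h1 := hNi Ni (le_refl _)
      have h2 := hNi (Ni+1) (by omega)
      rw [Function.comp_apply, Real.dist_eq] at h1 h2
      calc |f (φ Ni) - f (φ (Ni+1))|
          ≤ |f (φ Ni) - L| + |L - f (φ (Ni+1))| := abs_sub_le _ _ _
        _ < c/4 + c/4 := by rw [abs_sub_comm L]; exact add_lt_add h1 h2
        _ = c/2 := by ring
    set n1 : ℕ := N₀ + φ Ni with hn1
    set n2 : ℕ := N₀ + φ (Ni+1) with hn2
    have hne12 : n1 ≠ n2 := by
      have hlt := hφ (show Ni < Ni + 1 by omega)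
      simp only [hn1, hn2]
      omega
    set P : ℤ := ⌊mid n2⌋ - ⌊mid n1⌋ with hP
    have hmidrel : |mid n2 - (mid n1 + (P:ℝ))| < c/2 := by
      have he : mid n2 - (mid n1 + (P:ℝ)) = f (φ (Ni+1)) - f (φ Ni) := by
        simp only [hf, Int.fract, hP, hn1, hn2]
        push_cast
        ring
      rw [he, abs_sub_comm]
      exact hd2
    have habs := abs_lt.1 hmidrel
    have hc1 : c ≤ be n1 - al n1 := hclow (φ Ni)
    have hc2 : c ≤ be n2 - al n2 := hclow (φ (Ni+1))
    have hm1 : mid n1 = (al n1 + be n1)/2 := rfl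
    have hm2 : mid n2 = (al n2 + be n2)/2 := rfl
    have hmem1 : mid n2 ∈ Set.Ioo (al n1 + (P:ℝ)) (be n1 + (P:ℝ)) := by
      constructor
      · have : al n1 ≤ mid n1 - c/2 := by rw [hm1]; linarith
        linarith [habs.1]
      · have : mid n1 + c/2 ≤ be n1 := by rw [hm1]; linarith
        linarith [habs.2]
    have hmem2 : mid n2 ∈ Set.Ioo (al n2) (be n2) := by
      have hab2 : al n2 < be n2 := lt_trans (hal_lt n2) (hbe_gt n2)
      constructor <;> rw [hm2] <;> [linarith; linarith]
    exact hgap_disj n1 n2 hne12 P ⟨mid n2, hmem1, hmem2⟩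

end CaseI

/-- For a semi-monotone circle map with finitely many flat spots
which is expanding on the positive-slope region P(h), every point whose entire
forward orbit lies in P(h) eventually lands on a recurrent point. -/

theorem statement6 (ht : ℝ → ℝ) (hsm : IsSemiMonotoneLift ht)
    (h : Circle1 → Circle1) (hlift : ∀ x, h (mk1 x) = mk1 (ht x))
    (l : ℕ) (a b : Fin l → ℝ)
    (hfs : ∀ i, IsFlatSpot ht (a i) (b i))
    (hrep : ∀ i, a i ∈ Set.Ico (0 : ℝ) 1)
    (hdist : Function.Injective a)
    (hall : ∀ a' b' : ℝ, IsFlatSpot ht a' b' → ∃ i, ∃ n : ℤ, a' = a i + n ∧ b' = b i + n)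
    (D : ℝ → ℝ) (hDcont : ContinuousOn D (flatComplR a b))
    (hD : ∀ x ∈ flatComplR a b, 1 < D x ∧ HasDerivWithinAt ht (D x) (flatComplR a b) x) :
    ∀ x : Circle1, (∀ n : ℕ, h^[n] x ∈ flatComplC a b) →
      ∃ n : ℕ, IsRecurrentPt h (h^[n] x) := by
  intro x hx
  obtain ⟨x₀, rfl⟩ := QuotientAddGroup.mk_surjective x
  have hx' : ∀ n : ℕ, h^[n] (mk1 x₀) ∈ flatComplC a b := hx
  have horb : ∀ n, ht^[n] x₀ ∈ flatComplR a b := by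
    intro n
    have h1 := hx' n
    rw [s6_hlift_iter hlift n x₀] at h1
    exact s6_memC_iff.1 h1
  obtain ⟨δ, hδ, hδi⟩ := s6_delta a b (fun i => (hfs i).1)
  have hgoal : ∃ n : ℕ, IsRecurrentPt h (h^[n] (mk1 x₀)) := by
    by_cases hper : ∃ (q : ℕ) (p : ℤ) (z : ℝ), 0 < q ∧ ht^[q] z = z + p
    · obtain ⟨q, p, z, hq, hz⟩ := hper
      exact s6_caseR hsm hlift hD hδ hδi horb hq hz
    · exact s6_caseI hsm hlift hD (fun i => (hfs i).1) horb hper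
  exact hgoal
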